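/- Let q ∈ (0, 1) and let G : [0, 1] → ℝ be a continuous convex function with G ≥ 0 and min_{[0,1]} G = 0. Then ∫₀¹ G(s)^{q/(1−q)} ds ≤ (∫₀¹ |G′(s)|^q ds)^{1/(1−q)}, where G′ denotes the derivative of G, which exists at Lebesgue-almost every s ∈ (0, 1), and the right-hand side may equal +∞. -/

import Mathlib

open MeasureTheory Filter Topology
open scoped ENNReal

namespace ConvexMinAux

variable {G : ℝ → ℝ} {a : ℝ}

lemma mono_right (hconv : ConvexOn ℝ (Set.Icc 0 1) G)
    (hnonneg : ∀ s ∈ Set.Icc (0:ℝ) 1, 0 ≤ G s)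
    (ha : a ∈ Set.Icc (0:ℝ) 1) (hGa : G a = 0) :
    MonotoneOn G (Set.Icc a 1) := by
  intro x hx y hy hxy
  have hx1 : x ∈ Set.Icc (0:ℝ) 1 := ⟨le_trans ha.1 hx.1, hx.2⟩
  have hy1 : y ∈ Set.Icc (0:ℝ) 1 := ⟨le_trans ha.1 hy.1, hy.2⟩
  rcases eq_or_lt_of_le hxy with rfl | hxy'
  · exact le_rfl
  rcases eq_or_lt_of_le hx.1 with rfl | hax
  · rw [hGa]; exact hnonneg y hy1
  have hmono := hconv.slope_mono ha
  have h2 : slope G a x ≤ slope G a y :=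
    hmono ⟨hx1, hax.ne'⟩ ⟨hy1, (hax.trans hxy').ne'⟩ hxy
  rw [slope_def_field, slope_def_field, hGa, sub_zero, sub_zero] at h2
  have hxa : 0 < x - a := by linarith
  have hya : 0 < y - a := by linarith
  rw [div_le_div_iff₀ hxa hya] at h2
  have hGy : 0 ≤ G y := hnonneg y hy1
  nlinarith [mul_nonneg hGy (sub_nonneg.2 hxy), h2, hya]

lemma hasRightDeriv (hconv : ConvexOn ℝ (Set.Icc 0 1) G) (hmono : MonotoneOn G (Set.Icc a 1))
    (ha0 : 0 ≤ a) {x : ℝ} (hx : x ∈ Set.Ioo a 1) :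
    HasDerivWithinAt G (sInf (slope G x '' Set.Ioo x 1)) (Set.Ioi x) x := by
  have hx1 : x ∈ Set.Icc (0:ℝ) 1 := ⟨ha0.trans hx.1.le, hx.2.le⟩
  have hne : (Set.Ioo x 1).Nonempty := Set.nonempty_Ioo.2 hx.2
  have hsub : Set.Ioo x 1 ⊆ Set.Icc (0:ℝ) 1 \ {x} := by
    intro y hy
    exact ⟨⟨hx1.1.trans hy.1.le, hy.2.le⟩, by simp [hy.1.ne']⟩
  have hMf : MonotoneOn (slope G x) (Set.Ioo x 1) := (hconv.slope_mono hx1).mono hsub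
  have hbdd : BddBelow (slope G x '' Set.Ioo x 1) := by
    refine ⟨0, ?_⟩
    rintro _ ⟨y, hy, rfl⟩
    rw [slope_def_field]
    apply div_nonneg _ (by linarith [hy.1] : (0:ℝ) ≤ y - x)
    have := hmono ⟨hx.1.le, hx.2.le⟩ ⟨hx.1.le.trans hy.1.le, hy.2.le⟩ hy.1.le
    linarith
  have htend := MonotoneOn.tendsto_nhdsWithin_Ioo_right hne hMf hbdd
  rw [hasDerivWithinAt_iff_tendsto_slope]
  have hset : Set.Ioi x \ {x} = Set.Ioi x := by simp
  rw [hset]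
  exact htend

lemma aux_right (q : ℝ) (hq : q ∈ Set.Ioo (0:ℝ) 1) (G : ℝ → ℝ)
    (hcont : ContinuousOn G (Set.Icc 0 1))
    (hconv : ConvexOn ℝ (Set.Icc 0 1) G)
    (hnonneg : ∀ s ∈ Set.Icc (0:ℝ) 1, 0 ≤ G s)
    {a : ℝ} (ha : a ∈ Set.Icc (0:ℝ) 1) (hGa : G a = 0) :
    ∫⁻ s in Set.Ioo a 1, ENNReal.ofReal (G s ^ (q / (1 - q))) ≤
      (∫⁻ s in Set.Ioo a 1, ENNReal.ofReal (|deriv G s| ^ q)) ^ (1 / (1 - q)) := by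
  obtain ⟨hq0, hq1⟩ := hq
  have h1q : 0 < 1 - q := by linarith
  set p : ℝ := q / (1 - q) with hp_def
  have hp : 0 < p := div_pos hq0 h1q
  have hpq : (1 - q) * p = q := by rw [hp_def]; field_simp
  have hr : 1 / (1 - q) = p + 1 := by rw [hp_def]; field_simp; ring
  set I : ℝ≥0∞ := ∫⁻ s in Set.Ioo a 1, ENNReal.ofReal (|deriv G s| ^ q) with hI_def
  have hmono : MonotoneOn G (Set.Icc a 1) := mono_right hconv hnonneg ha hGa
  have hdiff_ae : ∀ᵐ x, x ∈ Set.Icc a 1 → DifferentiableWithinAt ℝ G (Set.Icc a 1) x :=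
    hmono.ae_differentiableWithinAt_of_mem
  have hdiffAt : ∀ᵐ x, x ∈ Set.Ioo a 1 → DifferentiableAt ℝ G x := by
    filter_upwards [hdiff_ae] with x hx hx'
    exact (hx ⟨hx'.1.le, hx'.2.le⟩).differentiableAt (Icc_mem_nhds hx'.1 hx'.2)
  have hderiv_nonneg : ∀ x ∈ Set.Ioo a 1, DifferentiableAt ℝ G x → 0 ≤ deriv G x := by
    intro x hx hdx
    have hx1 : x ∈ Set.Icc (0:ℝ) 1 := ⟨ha.1.trans hx.1.le, hx.2.le⟩
    have hs := hconv.slope_le_deriv ha hx1 hx.1 hdx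
    rw [slope_def_field, hGa, sub_zero] at hs
    exact le_trans (div_nonneg (hnonneg x hx1) (by linarith [hx.1])) hs
  have claim : ∀ᵐ s, s ∈ Set.Ioo a 1 →
      ENNReal.ofReal (G s ^ p) ≤ ENNReal.ofReal (|deriv G s| ^ q) * I ^ p := by
    filter_upwards [hdiffAt] with s hsdiff hs
    have hds : DifferentiableAt ℝ G s := hsdiff hs
    have hs1 : s ∈ Set.Icc (0:ℝ) 1 := ⟨ha.1.trans hs.1.le, hs.2.le⟩
    set d : ℝ := deriv G s with hd_def
    have hd0 : 0 ≤ d := hderiv_nonneg s hs hds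
    set g' : ℝ → ℝ := fun t => sInf (slope G t '' Set.Ioo t 1) with hg'
    have hg'deriv : ∀ t ∈ Set.Ioo a s, HasDerivWithinAt G (g' t) (Set.Ioi t) t := by
      intro t ht
      exact hasRightDeriv hconv hmono ha.1 ⟨ht.1, ht.2.trans hs.2⟩
    have hae : ∀ᵐ t, t ∈ Set.Ioo a s →
        g' t = deriv G t ∧ 0 ≤ deriv G t ∧ deriv G t ≤ d := by
      filter_upwards [hdiffAt] with t hdt ht
      have ht1 : t ∈ Set.Ioo a 1 := ⟨ht.1, ht.2.trans hs.2⟩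
      have hdt' : DifferentiableAt ℝ G t := hdt ht1
      have htI : t ∈ Set.Icc (0:ℝ) 1 := ⟨ha.1.trans ht.1.le, ht1.2.le⟩
      refine ⟨?_, hderiv_nonneg t ht1 hdt', ?_⟩
      · have h1 := (hg'deriv t ht).derivWithin (uniqueDiffWithinAt_Ioi t)
        have h2 := (hdt'.hasDerivAt.hasDerivWithinAt (s := Set.Ioi t)).derivWithin
          (uniqueDiffWithinAt_Ioi t)
        rw [← h1, ← h2]
      · calc deriv G t ≤ slope G t s := hconv.deriv_le_slope htI hs1 ht.2 hdt'
          _ ≤ deriv G s := hconv.slope_le_deriv htI hs1 ht.2 hds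
    have haeR : ∀ᵐ t ∂(volume.restrict (Set.Ioo a s)),
        g' t = deriv G t ∧ 0 ≤ deriv G t ∧ deriv G t ≤ d :=
      (ae_restrict_iff' measurableSet_Ioo).2 hae
    have hint_deriv : IntegrableOn (deriv G) (Set.Ioo a s) := by
      refine Integrable.mono' (g := fun _ => d) (integrableOn_const measure_Ioo_lt_top.ne)
        (measurable_deriv G).aestronglyMeasurable ?_
      filter_upwards [haeR] with t ht
      rw [Real.norm_eq_abs, abs_of_nonneg ht.2.1]
      exact ht.2.2
    have hint_g' : IntegrableOn g' (Set.Ioo a s) :=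
      hint_deriv.congr (haeR.mono fun t ht => ht.1.symm)
    have hFTC : G s - G a ≤ ∫ y in a..s, g' y := by
      apply intervalIntegral.sub_le_integral_of_hasDeriv_right_of_le hs.1.le
        (hcont.mono (Set.Icc_subset_Icc ha.1 hs1.2)) hg'deriv
      · show Integrable g' (volume.restrict (Set.Icc a s))
        rw [← Measure.restrict_congr_set Ioo_ae_eq_Icc]
        exact hint_g'
      · exact fun x _ => le_rfl
    have h1 : ∫ y in a..s, g' y = ∫ y in Set.Ioo a s, deriv G y := by
      rw [intervalIntegral.integral_of_le hs.1.le, integral_Ioc_eq_integral_Ioo]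
      exact integral_congr_ae (haeR.mono fun t ht => ht.1)
    have h2 : ENNReal.ofReal (∫ y in Set.Ioo a s, deriv G y)
        = ∫⁻ y in Set.Ioo a s, ENNReal.ofReal (deriv G y) :=
      ofReal_integral_eq_lintegral_ofReal hint_deriv (haeR.mono fun t ht => ht.2.1)
    have h3 : (∫⁻ y in Set.Ioo a s, ENNReal.ofReal (deriv G y))
        ≤ ∫⁻ y in Set.Ioo a s, ENNReal.ofReal (d ^ (1-q) * |deriv G y| ^ q) := by
      refine lintegral_mono_ae (haeR.mono fun t ht => ?_)
      apply ENNReal.ofReal_le_ofReal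
      obtain ⟨_, h0, hle⟩ := ht
      rcases eq_or_lt_of_le h0 with h0' | h0'
      · rw [← h0']
        positivity
      · rw [abs_of_nonneg h0]
        calc deriv G t = deriv G t ^ ((1-q) + q) := by rw [sub_add_cancel, Real.rpow_one]
          _ = deriv G t ^ (1-q) * deriv G t ^ q := Real.rpow_add h0' _ _
          _ ≤ d ^ (1-q) * deriv G t ^ q :=
            mul_le_mul_of_nonneg_right (Real.rpow_le_rpow h0 hle h1q.le)
              (Real.rpow_nonneg h0 _)
    have h4 : (∫⁻ y in Set.Ioo a s, ENNReal.ofReal (d ^ (1-q) * |deriv G y| ^ q))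
        = ENNReal.ofReal (d ^ (1-q)) * ∫⁻ y in Set.Ioo a s, ENNReal.ofReal (|deriv G y| ^ q) := by
      simp_rw [ENNReal.ofReal_mul (Real.rpow_nonneg hd0 _)]
      rw [lintegral_const_mul' _ _ ENNReal.ofReal_ne_top]
    have h5 : (∫⁻ y in Set.Ioo a s, ENNReal.ofReal (|deriv G y| ^ q)) ≤ I :=
      lintegral_mono_set (Set.Ioo_subset_Ioo le_rfl hs.2.le)
    have hkey : ENNReal.ofReal (G s) ≤ ENNReal.ofReal (d ^ (1-q)) * I := by
      calc ENNReal.ofReal (G s) ≤ ENNReal.ofReal (∫ y in Set.Ioo a s, deriv G y) := by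
            apply ENNReal.ofReal_le_ofReal
            rw [← h1]
            linarith [hFTC]
        _ = _ := h2
        _ ≤ _ := h3
        _ = _ := h4
        _ ≤ _ := mul_le_mul_right h5 _
    have hGs0 : 0 ≤ G s := hnonneg s hs1
    calc ENNReal.ofReal (G s ^ p) = ENNReal.ofReal (G s) ^ p :=
          (ENNReal.ofReal_rpow_of_nonneg hGs0 hp.le).symm
      _ ≤ (ENNReal.ofReal (d ^ (1-q)) * I) ^ p := ENNReal.rpow_le_rpow hkey hp.le
      _ = ENNReal.ofReal (d ^ (1-q)) ^ p * I ^ p := ENNReal.mul_rpow_of_nonneg _ _ hp.le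
      _ = ENNReal.ofReal (|deriv G s| ^ q) * I ^ p := by
          rw [ENNReal.ofReal_rpow_of_nonneg (Real.rpow_nonneg hd0 _) hp.le,
            ← Real.rpow_mul hd0, hpq, ← hd_def, abs_of_nonneg hd0]
  have hmeas : Measurable fun s => ENNReal.ofReal (|deriv G s| ^ q) :=
    ((Real.continuous_rpow_const hq0.le).measurable.comp
      (measurable_deriv G).abs).ennreal_ofReal
  calc (∫⁻ s in Set.Ioo a 1, ENNReal.ofReal (G s ^ p))
      ≤ ∫⁻ s in Set.Ioo a 1, ENNReal.ofReal (|deriv G s| ^ q) * I ^ p :=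
        lintegral_mono_ae ((ae_restrict_iff' measurableSet_Ioo).2 claim)
    _ = I * I ^ p := lintegral_mul_const _ hmeas
    _ ≤ I ^ (1 / (1-q)) := by
        rw [hr]
        rcases eq_or_ne I 0 with h | h
        · simp [h, ENNReal.zero_rpow_of_pos hp]
        rcases eq_or_ne I ⊤ with h' | h'
        · rw [h', ENNReal.top_rpow_of_pos (by positivity : (0:ℝ) < p + 1)]
          exact le_top
        · rw [ENNReal.rpow_add p 1 h h', ENNReal.rpow_one, mul_comm]

end ConvexMinAux

/-- Let `q ∈ (0,1)` and let `G : [0,1] → ℝ` be continuous convex with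
`G ≥ 0` and `min G = 0`. Then
`∫₀¹ G(s)^{q/(1-q)} ds ≤ (∫₀¹ |G'(s)|^q ds)^{1/(1-q)}` (the right-hand side may be `+∞`). -/
theorem convex_min_zero_power_integral_bound
    (q : ℝ) (hq : q ∈ Set.Ioo (0:ℝ) 1) (G : ℝ → ℝ)
    (hcont : ContinuousOn G (Set.Icc 0 1))
    (hconv : ConvexOn ℝ (Set.Icc 0 1) G)
    (hnonneg : ∀ s ∈ Set.Icc (0:ℝ) 1, 0 ≤ G s)
    (hmin : ∃ a ∈ Set.Icc (0:ℝ) 1, G a = 0) :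
    ∫⁻ s in Set.Icc (0:ℝ) 1, ENNReal.ofReal (G s ^ (q / (1 - q))) ≤
      (∫⁻ s in Set.Icc (0:ℝ) 1, ENNReal.ofReal (|deriv G s| ^ q)) ^ (1 / (1 - q)) := by
  obtain ⟨a, ha, hGa⟩ := hmin
  obtain ⟨hq0, hq1⟩ := hq
  have h1q : 0 < 1 - q := by linarith
  -- the reflected function
  set H : ℝ → ℝ := fun x => G (1 - x) with hH_def
  have hmem : ∀ x ∈ Set.Icc (0:ℝ) 1, (1:ℝ) - x ∈ Set.Icc (0:ℝ) 1 := by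
    intro x hx
    exact ⟨by linarith [hx.2], by linarith [hx.1]⟩
  have hconvH : ConvexOn ℝ (Set.Icc 0 1) H := by
    refine ⟨convex_Icc 0 1, ?_⟩
    intro x hx y hy α β hα hβ hαβ
    have h1 := hconv.2 (hmem x hx) (hmem y hy) hα hβ hαβ
    simp only [smul_eq_mul] at h1 ⊢
    have e : 1 - (α * x + β * y) = α * (1 - x) + β * (1 - y) := by
      linear_combination -hαβ
    show G (1 - (α * x + β * y)) ≤ α * G (1 - x) + β * G (1 - y)
    rw [e]
    exact h1
  have hcontH : ContinuousOn H (Set.Icc 0 1) :=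
    hcont.comp ((continuous_const.sub continuous_id).continuousOn) hmem
  have hnonnegH : ∀ s ∈ Set.Icc (0:ℝ) 1, 0 ≤ H s := fun s hs => hnonneg _ (hmem s hs)
  have haH : (1:ℝ) - a ∈ Set.Icc (0:ℝ) 1 := hmem a ha
  have hGaH : H (1 - a) = 0 := by
    show G (1 - (1 - a)) = 0
    rw [sub_sub_cancel]
    exact hGa
  -- the two half estimates
  have R1 := ConvexMinAux.aux_right q ⟨hq0, hq1⟩ G hcont hconv hnonneg ha hGa
  have R2 := ConvexMinAux.aux_right q ⟨hq0, hq1⟩ H hcontH hconvH hnonnegH haH hGaH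
  -- change of variables for the reflected function
  have hmp : MeasurePreserving (fun x : ℝ => 1 - x) volume volume :=
    Measure.measurePreserving_sub_left volume 1
  have hemb : MeasurableEmbedding (fun x : ℝ => 1 - x) :=
    (Homeomorph.subLeft (1:ℝ)).measurableEmbedding
  have hpre : (fun x : ℝ => 1 - x) ⁻¹' (Set.Ioo 0 a) = Set.Ioo (1 - a) 1 := by
    ext x
    simp only [Set.mem_preimage, Set.mem_Ioo]
    constructor <;> (intro h; constructor <;> linarith [h.1, h.2])
  have hcv : ∀ f : ℝ → ℝ≥0∞,
      (∫⁻ x in Set.Ioo (1 - a) 1, f (1 - x)) = ∫⁻ s in Set.Ioo 0 a, f s := by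
    intro f
    rw [← hpre]
    exact hmp.setLIntegral_comp_preimage_emb hemb f _
  have hderivH : ∀ x : ℝ, |deriv H x| = |deriv G (1 - x)| := by
    intro x
    rw [hH_def]
    rw [deriv_comp_const_sub, abs_neg]
  have hL2 : (∫⁻ x in Set.Ioo (1 - a) 1, ENNReal.ofReal (H x ^ (q / (1 - q))))
      = ∫⁻ s in Set.Ioo 0 a, ENNReal.ofReal (G s ^ (q / (1 - q))) :=
    hcv (fun s => ENNReal.ofReal (G s ^ (q / (1 - q))))
  have hI2 : (∫⁻ x in Set.Ioo (1 - a) 1, ENNReal.ofReal (|deriv H x| ^ q))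
      = ∫⁻ s in Set.Ioo 0 a, ENNReal.ofReal (|deriv G s| ^ q) := by
    have : (∫⁻ x in Set.Ioo (1 - a) 1, ENNReal.ofReal (|deriv H x| ^ q))
        = ∫⁻ x in Set.Ioo (1 - a) 1,
            (fun s => ENNReal.ofReal (|deriv G s| ^ q)) (1 - x) := by
      apply lintegral_congr
      intro x
      simp only [hderivH x]
    rw [this]
    exact hcv (fun s => ENNReal.ofReal (|deriv G s| ^ q))
  rw [hL2, hI2] at R2
  -- decomposition of [0,1]
  have hdisj : Disjoint (Set.Ioo (0:ℝ) a) (Set.Ioo a 1) := by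
    rw [Set.disjoint_left]
    rintro x hx hy
    exact lt_asymm hx.2 hy.1
  have hsplit : ∀ f : ℝ → ℝ≥0∞,
      (∫⁻ s in Set.Icc (0:ℝ) 1, f s)
        = (∫⁻ s in Set.Ioo (0:ℝ) a, f s) + ∫⁻ s in Set.Ioo a 1, f s := by
    intro f
    have hsub1 : (Set.Ioo (0:ℝ) a ∪ Set.Ioo a 1) ⊆ Set.Icc (0:ℝ) 1 := by
      rintro x (hx | hx)
      · exact ⟨hx.1.le, hx.2.le.trans ha.2⟩
      · exact ⟨ha.1.trans hx.1.le, hx.2.le⟩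
    have hsub2 : Set.Icc (0:ℝ) 1 \ (Set.Ioo (0:ℝ) a ∪ Set.Ioo a 1) ⊆ {0, a, 1} := by
      rintro x ⟨hx, hx'⟩
      simp only [Set.mem_union, Set.mem_Ioo, not_or] at hx'
      simp only [Set.mem_insert_iff, Set.mem_singleton_iff]
      by_contra hc
      push_neg at hc
      obtain ⟨h0, hA, h1⟩ := hc
      have hx0 : 0 < x := lt_of_le_of_ne hx.1 (Ne.symm h0)
      have hx1 : x < 1 := lt_of_le_of_ne hx.2 h1
      have hge : a ≤ x := by
        by_contra hlt
        exact hx'.1 ⟨hx0, not_le.1 hlt⟩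
      have hle : x ≤ a := by
        by_contra hlt
        exact hx'.2 ⟨not_le.1 hlt, hx1⟩
      exact hA (le_antisymm hle hge)
    have hnull : volume ({0, a, 1} : Set ℝ) = 0 :=
      (((Set.finite_singleton (1:ℝ)).insert a).insert 0).measure_zero volume
    have h1 : (Set.Icc (0:ℝ) 1 : Set ℝ) =ᵐ[volume] (Set.Ioo (0:ℝ) a ∪ Set.Ioo a 1 : Set ℝ) := by
      rw [MeasureTheory.ae_eq_set]
      refine ⟨measure_mono_null hsub2 hnull, ?_⟩
      rw [Set.diff_eq_empty.2 hsub1]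
      exact measure_empty
    rw [setLIntegral_congr h1, lintegral_union measurableSet_Ioo hdisj]
  rw [hsplit (fun s => ENNReal.ofReal (G s ^ (q / (1 - q)))),
    hsplit (fun s => ENNReal.ofReal (|deriv G s| ^ q))]
  set IL : ℝ≥0∞ := ∫⁻ s in Set.Ioo (0:ℝ) a, ENNReal.ofReal (|deriv G s| ^ q) with hIL
  set IR : ℝ≥0∞ := ∫⁻ s in Set.Ioo a 1, ENNReal.ofReal (|deriv G s| ^ q) with hIR
  have hr1 : 1 ≤ 1 / (1 - q) := by
    rw [le_div_iff₀ h1q]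
    linarith
  have hr0 : (0:ℝ) < 1 / (1 - q) := lt_of_lt_of_le one_pos hr1
  calc (∫⁻ s in Set.Ioo (0:ℝ) a, ENNReal.ofReal (G s ^ (q / (1 - q))))
        + ∫⁻ s in Set.Ioo a 1, ENNReal.ofReal (G s ^ (q / (1 - q)))
      ≤ IL ^ (1 / (1 - q)) + IR ^ (1 / (1 - q)) := add_le_add R2 R1
    _ = ((IL ^ (1 / (1 - q)) + IR ^ (1 / (1 - q))) ^ (1 - q)) ^ (1 / (1 - q)) := by
        rw [← ENNReal.rpow_mul]
        rw [(show (1 - q) * (1 / (1 - q)) = 1 by field_simp), ENNReal.rpow_one]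
    _ ≤ (IL + IR) ^ (1 / (1 - q)) := by
        apply ENNReal.rpow_le_rpow _ hr0.le
        have := ENNReal.rpow_add_rpow_le_add IL IR hr1
        rwa [(show 1 / (1 / (1 - q)) = 1 - q by field_simp)] at this
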